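/- For 1 < p ≤ 2 and all x, y ∈ ℝ^N, (1 + |x|² + |y|²)^{(2−p)/2} · ((|x|^{p−2}x − |y|^{p−2}y) · (x − y)) ≥ (p − 1)|x − y|². -/

import Mathlib

open Real

private lemma aux_base {p a T : ℝ} (hp2 : p ≤ 2) (ha : 0 ≤ a) (hT : 0 < T)
    (haT : a ^ 2 ≤ T) : T ^ ((p - 2) / 2) * a ≤ a ^ (p - 2) * a := by
  rcases eq_or_lt_of_le ha with rfl | ha'
  · simp
  · have h1 : T ^ ((p - 2) / 2) ≤ (a ^ 2) ^ ((p - 2) / 2) :=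
      Real.rpow_le_rpow_of_nonpos (by positivity) haT (by linarith)
    have h2 : (a ^ 2) ^ ((p - 2) / 2) = a ^ (p - 2) := by
      rw [← Real.rpow_natCast_mul ha 2]
      congr 1
      push_cast
      ring
    exact mul_le_mul_of_nonneg_right (h2 ▸ h1) ha

private lemma aux_rpow_split {p c : ℝ} (hp : 1 < p) (hc : 0 ≤ c) :
    c ^ (p - 1) = c ^ (p - 2) * c := by
  rcases eq_or_lt_of_le hc with rfl | hc'
  · rw [Real.zero_rpow (sub_ne_zero.mpr hp.ne'), mul_zero]
  · rw [← Real.rpow_add_one hc'.ne']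
    ring_nf

/-- Bernoulli-type: concavity of `x ↦ x^(p-1)`. -/
private lemma aux_bern {p a b : ℝ} (hp : 1 < p) (hp2 : p ≤ 2) (ha : 0 < a)
    (hb : 0 ≤ b) (hba : b ≤ a) :
    (p - 1) * a ^ (p - 2) * (a - b) ≤ a ^ (p - 1) - b ^ (p - 1) := by
  have hs : (-1 : ℝ) ≤ b / a - 1 := by
    have : 0 ≤ b / a := div_nonneg hb ha.le
    linarith
  have hbern : (b / a) ^ (p - 1) ≤ 1 + (p - 1) * (b / a - 1) := by
    have h := rpow_one_add_le_one_add_mul_self hs (p := p - 1) (by linarith) (by linarith)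
    rwa [show 1 + (b / a - 1) = b / a by ring] at h
  have hapos : (0 : ℝ) < a ^ (p - 1) := Real.rpow_pos_of_pos ha _
  have ha0 : a ≠ 0 := ha.ne'
  have e1 : a ^ (p - 1) = a ^ (p - 2) * a := aux_rpow_split hp ha.le
  have h4 : b ^ (p - 1) ≤ a ^ (p - 1) + (p - 1) * a ^ (p - 2) * (b - a) := by
    calc b ^ (p - 1) = (b / a) ^ (p - 1) * a ^ (p - 1) := by
          rw [Real.div_rpow hb ha.le, div_mul_cancel₀ _ hapos.ne']
      _ ≤ (1 + (p - 1) * (b / a - 1)) * a ^ (p - 1) :=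
          mul_le_mul_of_nonneg_right hbern hapos.le
      _ = a ^ (p - 1) + (p - 1) * a ^ (p - 2) * (b - a) := by
          rw [e1]; field_simp
  linarith

private lemma aux_key {p a b t : ℝ} (hp : 1 < p) (hp2 : p ≤ 2) (ha : 0 ≤ a) (hb : 0 ≤ b)
    (ht1 : -(a * b) ≤ t) (ht2 : t ≤ a * b) :
    (p - 1) * (1 + a ^ 2 + b ^ 2) ^ ((p - 2) / 2) * (a ^ 2 + b ^ 2 - 2 * t) ≤
      a ^ (p - 2) * a ^ 2 + b ^ (p - 2) * b ^ 2 - (a ^ (p - 2) + b ^ (p - 2)) * t := by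
  set T := 1 + a ^ 2 + b ^ 2 with hTdef
  have hT : 0 < T := by positivity
  set K := T ^ ((p - 2) / 2) with hKdef
  have hK : 0 < K := Real.rpow_pos_of_pos hT _
  have hKa : K * a ≤ a ^ (p - 2) * a := aux_base hp2 ha hT (by nlinarith)
  have hKb : K * b ≤ b ^ (p - 2) * b := aux_base hp2 hb hT (by nlinarith)
  -- endpoint t = -ab
  have E2 : (p - 1) * K * (a + b) ^ 2 ≤
      (a ^ (p - 2) * a + b ^ (p - 2) * b) * (a + b) := by
    have h1 : (p - 1) * K * (a + b) ^ 2 ≤ K * (a + b) ^ 2 := by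
      nlinarith [mul_nonneg hK.le (sq_nonneg (a + b))]
    have h2 := mul_le_mul_of_nonneg_right (add_le_add hKa hKb)
      (by linarith : (0:ℝ) ≤ a + b)
    nlinarith [h1, h2]
  -- endpoint t = ab (wlog form)
  have E1gen : ∀ a b : ℝ, 0 ≤ b → b ≤ a → K * a ≤ a ^ (p - 2) * a →
      (p - 1) * K * (a - b) ^ 2 ≤ (a ^ (p - 2) * a - b ^ (p - 2) * b) * (a - b) := by
    intro a b hb hba hKa
    rcases eq_or_lt_of_le (hb.trans hba) with rfl | ha'
    · have hb0 : b = 0 := le_antisymm hba hb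
      simp [hb0]
    · have hbern := aux_bern hp hp2 ha' hb hba
      rw [aux_rpow_split hp (by linarith), aux_rpow_split hp hb] at hbern
      have hKa' : K ≤ a ^ (p - 2) := le_of_mul_le_mul_right hKa ha'
      have hab : (0:ℝ) ≤ a - b := by linarith
      have s1 := mul_le_mul_of_nonneg_left
        (mul_le_mul_of_nonneg_right hKa' (sq_nonneg (a - b)))
        (by linarith : (0:ℝ) ≤ p - 1)
      have s2 := mul_le_mul_of_nonneg_right hbern hab
      calc (p - 1) * K * (a - b) ^ 2 = (p - 1) * (K * (a - b) ^ 2) := by ring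
        _ ≤ (p - 1) * (a ^ (p - 2) * (a - b) ^ 2) := s1
        _ = (p - 1) * a ^ (p - 2) * (a - b) * (a - b) := by ring
        _ ≤ _ := s2
  have E1 : (p - 1) * K * (a - b) ^ 2 ≤
      (a ^ (p - 2) * a - b ^ (p - 2) * b) * (a - b) := by
    rcases le_total b a with h | h
    · exact E1gen a b hb h hKa
    · have h' := E1gen b a ha h hKb
      linarith [h']
  -- linear in t
  rcases le_total 0 (2 * (p - 1) * K - (a ^ (p - 2) + b ^ (p - 2))) with hD | hD
  · have := mul_nonneg hD (by linarith : (0:ℝ) ≤ t + a * b)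
    nlinarith [E2, this]
  · have := mul_nonneg (by linarith : (0:ℝ) ≤ -(2 * (p - 1) * K - (a ^ (p - 2) + b ^ (p - 2))))
      (by linarith : (0:ℝ) ≤ a * b - t)
    nlinarith [E1, this]

theorem stmt_3 (N : ℕ) (p : ℝ) (hp : 1 < p) (hp2 : p ≤ 2)
    (x y : EuclideanSpace ℝ (Fin N)) :
    (p - 1) * ‖x - y‖ ^ 2 ≤
      (1 + ‖x‖ ^ 2 + ‖y‖ ^ 2) ^ ((2 - p) / 2) *
        (inner ℝ ((‖x‖ ^ (p - 2)) • x - (‖y‖ ^ (p - 2)) • y) (x - y) : ℝ) := by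
  have ht2 : (inner ℝ x y : ℝ) ≤ ‖x‖ * ‖y‖ := real_inner_le_norm x y
  have ht1 : -(‖x‖ * ‖y‖) ≤ (inner ℝ x y : ℝ) := by
    have h := abs_real_inner_le_norm x y
    rw [abs_le] at h
    linarith [h.1]
  have hinner : (inner ℝ ((‖x‖ ^ (p - 2)) • x - (‖y‖ ^ (p - 2)) • y) (x - y) : ℝ) =
      ‖x‖ ^ (p - 2) * ‖x‖ ^ 2 + ‖y‖ ^ (p - 2) * ‖y‖ ^ 2 -
        (‖x‖ ^ (p - 2) + ‖y‖ ^ (p - 2)) * (inner ℝ x y : ℝ) := by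
    rw [inner_sub_left, inner_sub_right, inner_sub_right, real_inner_smul_left,
      real_inner_smul_left, real_inner_smul_left, real_inner_smul_left,
      real_inner_self_eq_norm_sq, real_inner_self_eq_norm_sq, real_inner_comm y x]
    ring
  have hnorm : ‖x - y‖ ^ 2 = ‖x‖ ^ 2 + ‖y‖ ^ 2 - 2 * (inner ℝ x y : ℝ) := by
    rw [norm_sub_sq_real]; ring
  have hT : (0:ℝ) < 1 + ‖x‖ ^ 2 + ‖y‖ ^ 2 := by positivity
  have hc : (0:ℝ) < (1 + ‖x‖ ^ 2 + ‖y‖ ^ 2) ^ ((2 - p) / 2) := Real.rpow_pos_of_pos hT _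
  have hkey := aux_key hp hp2 (norm_nonneg x) (norm_nonneg y) ht1 ht2
  have hmul := mul_le_mul_of_nonneg_left hkey hc.le
  have hcancel : (1 + ‖x‖ ^ 2 + ‖y‖ ^ 2) ^ ((2 - p) / 2) *
      ((p - 1) * (1 + ‖x‖ ^ 2 + ‖y‖ ^ 2) ^ ((p - 2) / 2) *
        (‖x‖ ^ 2 + ‖y‖ ^ 2 - 2 * (inner ℝ x y : ℝ))) =
      (p - 1) * (‖x‖ ^ 2 + ‖y‖ ^ 2 - 2 * (inner ℝ x y : ℝ)) := by
    rw [show (1 + ‖x‖ ^ 2 + ‖y‖ ^ 2) ^ ((2 - p) / 2) *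
        ((p - 1) * (1 + ‖x‖ ^ 2 + ‖y‖ ^ 2) ^ ((p - 2) / 2) *
          (‖x‖ ^ 2 + ‖y‖ ^ 2 - 2 * (inner ℝ x y : ℝ))) =
        ((1 + ‖x‖ ^ 2 + ‖y‖ ^ 2) ^ ((2 - p) / 2) *
          (1 + ‖x‖ ^ 2 + ‖y‖ ^ 2) ^ ((p - 2) / 2)) *
        ((p - 1) * (‖x‖ ^ 2 + ‖y‖ ^ 2 - 2 * (inner ℝ x y : ℝ))) by ring,
      ← Real.rpow_add hT, show (2 - p) / 2 + (p - 2) / 2 = 0 by ring,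
      Real.rpow_zero, one_mul]
  rw [hinner, hnorm]
  calc (p - 1) * (‖x‖ ^ 2 + ‖y‖ ^ 2 - 2 * (inner ℝ x y : ℝ)) = _ := hcancel.symm
    _ ≤ _ := hmul
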